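/- Let 0 < α < 1, β = 1 − α, let t be real, and for z > 1 set δ_z = t·log z − arctan(t/β). Let ε > 0 and let 1 < w < v be reals such that |θ(u) − u| ≤ ε·u for all u ∈ [w,v]. Then W(v,w,t)·log v ≥ (v^β − w^β)/β − ( v^β·cos δ_v − w^β·cos δ_w )/√(β² + t²) − 2ε·( v^β + w^β ) − ε·( α + √(α² + t²) )·( v^β − w^β )/β. -/

import Mathlib

/-- Chebyshev's function `θ(x) = ∑_{p ≤ x, p prime} log p`. -/
noncomputable def theta (x : ℝ) : ℝ :=
  ∑ p ∈ (Finset.range (⌊x⌋₊ + 1)).filter Nat.Prime, Real.log p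

/-- `W(v,w,t) = ∑_{w < p ≤ v, p prime} (1 - cos(t log p))/p^α`. -/
noncomputable def W (α v w t : ℝ) : ℝ :=
  ∑ p ∈ (Finset.range (⌊v⌋₊ + 1)).filter (fun p : ℕ => Nat.Prime p ∧ w < (p : ℝ)),
    (1 - Real.cos (t * Real.log p)) / (p : ℝ) ^ α

namespace Stmt12Aux

open Real MeasureTheory

noncomputable def cc : ℕ → ℝ := fun k => if Nat.Prime k then Real.log k else 0

noncomputable def ff (α t u : ℝ) : ℝ := (1 - Real.cos (t * Real.log u)) * u ^ (-α)

noncomputable def gg (α t u : ℝ) : ℝ :=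
  (t * Real.sin (t * Real.log u) - α * (1 - Real.cos (t * Real.log u))) * u ^ (-α - 1)

noncomputable def FF (β t u : ℝ) : ℝ :=
  u ^ β / β - (β * Real.cos (t * Real.log u) + t * Real.sin (t * Real.log u)) * u ^ β / (β ^ 2 + t ^ 2)

lemma theta_eq (u : ℝ) : theta u = ∑ k ∈ Finset.Icc 0 ⌊u⌋₊, cc k := by
  rw [theta, Finset.sum_filter]
  apply Finset.sum_congr _ (fun _ _ => rfl)
  ext k; simp [Nat.lt_succ_iff]

lemma theta_mono : Monotone theta := by
  intro x y hxy
  apply Finset.sum_le_sum_of_subset_of_nonneg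
  · exact Finset.filter_subset_filter _ (Finset.range_subset_range.mpr
      (Nat.succ_le_succ (Nat.floor_le_floor hxy)))
  · intro p hp _
    simp only [Finset.mem_filter] at hp
    exact Real.log_nonneg (by exact_mod_cast hp.2.one_lt.le)

lemma hasDerivAt_ff (α t : ℝ) {u : ℝ} (hu : 0 < u) :
    HasDerivAt (ff α t) (gg α t u) u := by
  have hlog : HasDerivAt Real.log u⁻¹ u := Real.hasDerivAt_log (ne_of_gt hu)
  have h1 : HasDerivAt (fun u : ℝ => 1 - Real.cos (t * Real.log u))
      (Real.sin (t * Real.log u) * (t * u⁻¹)) u := by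
    have := ((hlog.const_mul t).cos).const_sub 1
    simpa [neg_mul, mul_comm] using this
  have h2 : HasDerivAt (fun u : ℝ => u ^ (-α)) ((-α) * u ^ (-α - 1)) u :=
    Real.hasDerivAt_rpow_const (Or.inl (ne_of_gt hu))
  have := h1.mul h2
  refine this.congr_deriv ?_
  have hpow : u ^ (-α) = u ^ (-α - 1) * u := by
    rw [← Real.rpow_add_one (ne_of_gt hu)]; ring_nf
  rw [gg, hpow]
  field_simp
  ring

lemma hasDerivAt_FF (β t : ℝ) (hβ : 0 < β) {u : ℝ} (hu : 0 < u) :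
    HasDerivAt (FF β t) ((1 - Real.cos (t * Real.log u)) * u ^ (β - 1)) u := by
  have hK : β ^ 2 + t ^ 2 > 0 := by positivity
  have hlog : HasDerivAt Real.log u⁻¹ u := Real.hasDerivAt_log (ne_of_gt hu)
  have hpow : HasDerivAt (fun u : ℝ => u ^ β) (β * u ^ (β - 1)) u :=
    Real.hasDerivAt_rpow_const (Or.inl (ne_of_gt hu))
  have hc : HasDerivAt (fun u : ℝ => β * Real.cos (t * Real.log u) + t * Real.sin (t * Real.log u))
      (β * (-Real.sin (t * Real.log u) * (t * u⁻¹)) + t * (Real.cos (t * Real.log u) * (t * u⁻¹))) u :=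
    (((hlog.const_mul t).cos).const_mul β).add (((hlog.const_mul t).sin).const_mul t)
  have h := ((hpow.div_const β).sub ((hc.mul hpow).div_const (β ^ 2 + t ^ 2)))
  refine h.congr_deriv ?_
  have hpow1 : u ^ β = u ^ (β - 1) * u := by
    rw [← Real.rpow_add_one (ne_of_gt hu)]; ring_nf
  rw [hpow1]
  field_simp
  ring

lemma cos_delta (β t x : ℝ) (hβ : 0 < β) :
    Real.cos (x - Real.arctan (t / β)) * Real.sqrt (β ^ 2 + t ^ 2) =
      β * Real.cos x + t * Real.sin x := by
  have hK : 0 < β ^ 2 + t ^ 2 := by positivity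
  have hs : Real.sqrt (1 + (t / β) ^ 2) = Real.sqrt (β ^ 2 + t ^ 2) / β := by
    rw [show (1 : ℝ) + (t / β) ^ 2 = (β ^ 2 + t ^ 2) / β ^ 2 by field_simp,
      Real.sqrt_div hK.le, Real.sqrt_sq hβ.le]
  rw [Real.cos_sub, Real.cos_arctan, Real.sin_arctan, hs]
  have h0 : Real.sqrt (β ^ 2 + t ^ 2) ≠ 0 := by positivity
  have hsq : Real.sqrt (β ^ 2 + t ^ 2) * Real.sqrt (β ^ 2 + t ^ 2) = β ^ 2 + t ^ 2 :=
    Real.mul_self_sqrt hK.le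
  field_simp

lemma trig_bound (α t x : ℝ) (hα : 0 < α) :
    |t * Real.sin x - α * (1 - Real.cos x)| ≤ α + Real.sqrt (α ^ 2 + t ^ 2) := by
  have h1 : |α * Real.cos x + t * Real.sin x| ≤ Real.sqrt (α ^ 2 + t ^ 2) := by
    apply Real.abs_le_sqrt
    nlinarith [Real.sin_sq_add_cos_sq x, sq_nonneg (α * Real.sin x - t * Real.cos x)]
  have := abs_le.mp h1
  rw [abs_le]
  constructor <;> nlinarith [this.1, this.2]

lemma continuousOn_gg (α t : ℝ) {s : Set ℝ} (hs : ∀ x ∈ s, 0 < x) :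
    ContinuousOn (gg α t) s := by
  intro u hu
  apply ContinuousAt.continuousWithinAt
  have hu0 := hs u hu
  have hlog : ContinuousAt Real.log u := Real.continuousAt_log (ne_of_gt hu0)
  have hpow : ContinuousAt (fun u : ℝ => u ^ (-α - 1)) u :=
    Real.continuousAt_rpow_const u _ (Or.inl (ne_of_gt hu0))
  exact (((Real.continuous_sin.continuousAt.comp (hlog.const_mul t)).const_mul t).sub
    (((Real.continuous_cos.continuousAt.comp (hlog.const_mul t)).const_sub 1).const_mul α)).mul hpow

end Stmt12Aux
open Real MeasureTheory Stmt12Aux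
set_option maxHeartbeats 1000000 in

theorem stmt_12 (α β t w v ε : ℝ) (hα0 : 0 < α) (hα1 : α < 1) (hβ : β = 1 - α)
    (hε : 0 < ε) (hw : 1 < w) (hwv : w < v)
    (hθ : ∀ u ∈ Set.Icc w v, |theta u - u| ≤ ε * u) :
    W α v w t * Real.log v ≥
      (v ^ β - w ^ β) / β -
        (v ^ β * Real.cos (t * Real.log v - Real.arctan (t / β)) -
          w ^ β * Real.cos (t * Real.log w - Real.arctan (t / β))) /
          Real.sqrt (β ^ 2 + t ^ 2) -
        2 * ε * (v ^ β + w ^ β) -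
        ε * (α + Real.sqrt (α ^ 2 + t ^ 2)) * (v ^ β - w ^ β) / β := by
  have hβ0 : 0 < β := by rw [hβ]; linarith
  have hw0 : (0:ℝ) < w := lt_trans one_pos hw
  have hv0 : (0:ℝ) < v := lt_trans hw0 hwv
  have hβ1 : β - 1 = -α := by rw [hβ]; ring
  set C : ℝ := α + Real.sqrt (α ^ 2 + t ^ 2) with hC
  have hC0 : 0 < C := by positivity
  have hpos : ∀ x ∈ Set.Icc w v, (0:ℝ) < x := fun x hx => lt_of_lt_of_le hw0 hx.1
  have hposIoc : ∀ x ∈ Set.Ioc w v, (0:ℝ) < x := fun x hx => lt_trans hw0 hx.1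
  -- Abel summation
  have hdiff : ∀ x ∈ Set.Icc w v, DifferentiableAt ℝ (ff α t) x :=
    fun x hx => (hasDerivAt_ff α t (hpos x hx)).differentiableAt
  have hderiv : Set.EqOn (gg α t) (deriv (ff α t)) (Set.Icc w v) :=
    fun x hx => ((hasDerivAt_ff α t (hpos x hx)).deriv).symm
  have hg_int : IntegrableOn (gg α t) (Set.Icc w v) :=
    (continuousOn_gg α t hpos).integrableOn_Icc
  have hf_int : IntegrableOn (deriv (ff α t)) (Set.Icc w v) :=
    hg_int.congr_fun hderiv measurableSet_Icc
  have habel := sum_mul_eq_sub_sub_integral_mul cc hw0.le hwv.le hdiff hf_int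
  simp_rw [← theta_eq] at habel
  have habel2 : ∑ k ∈ Finset.Ioc ⌊w⌋₊ ⌊v⌋₊, ff α t k * cc k =
      ff α t v * theta v - ff α t w * theta w -
        ∫ x in Set.Ioc w v, gg α t x * theta x := by
    rw [habel]
    congr 1
    refine setIntegral_congr_fun measurableSet_Ioc (fun x hx => ?_)
    rw [hderiv (Set.Ioc_subset_Icc_self hx)]
  -- splitting the integral
  have hcont_gid : ContinuousOn (fun x => gg α t x * x) (Set.Icc w v) :=
    (continuousOn_gg α t hpos).mul continuousOn_id
  have hInt1 : IntegrableOn (fun x => gg α t x * x) (Set.Ioc w v) :=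
    hcont_gid.integrableOn_Icc.mono_set Set.Ioc_subset_Icc_self
  have hmeasθ : Measurable theta := theta_mono.measurable
  have hcontD : ContinuousOn (fun x : ℝ => ε * C * x ^ (β - 1)) (Set.Icc w v) := by
    intro x hx
    have hca : ContinuousAt (fun y : ℝ => y ^ (β - 1)) x :=
      Real.continuousAt_rpow_const x _ (Or.inl (ne_of_gt (hpos x hx)))
    exact (continuousAt_const.mul hca).continuousWithinAt
  have hD_int : IntegrableOn (fun x : ℝ => ε * C * x ^ (β - 1)) (Set.Ioc w v) :=
    hcontD.integrableOn_Icc.mono_set Set.Ioc_subset_Icc_self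
  have hexp : ∀ x : ℝ, 0 < x → x ^ (-α - 1) * x = x ^ (β - 1) := by
    intro x hx0
    rw [← Real.rpow_add_one (ne_of_gt hx0)]
    congr 1; rw [hβ]; ring
  have hbound : ∀ x ∈ Set.Ioc w v, ‖gg α t x * (theta x - x)‖ ≤ ε * C * x ^ (β - 1) := by
    intro x hx
    have hx0 := hposIoc x hx
    have hxm : x ∈ Set.Icc w v := Set.Ioc_subset_Icc_self hx
    have h1 : |gg α t x| ≤ C * x ^ (-α - 1) := by
      rw [gg, abs_mul, abs_of_nonneg (Real.rpow_nonneg hx0.le _)]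
      exact mul_le_mul_of_nonneg_right (trig_bound α t _ hα0) (Real.rpow_nonneg hx0.le _)
    calc ‖gg α t x * (theta x - x)‖ = |gg α t x| * |theta x - x| := abs_mul _ _
      _ ≤ (C * x ^ (-α - 1)) * (ε * x) :=
          mul_le_mul h1 (hθ x hxm) (abs_nonneg _) (by positivity)
      _ = ε * C * (x ^ (-α - 1) * x) := by ring
      _ = ε * C * x ^ (β - 1) := by rw [hexp x hx0]
  have hE_meas : AEStronglyMeasurable (fun x => gg α t x * (theta x - x))
      (volume.restrict (Set.Ioc w v)) :=
    ((continuousOn_gg α t hposIoc).aestronglyMeasurable measurableSet_Ioc).mul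
      ((hmeasθ.sub measurable_id).aestronglyMeasurable)
  have hE_int : IntegrableOn (fun x => gg α t x * (theta x - x)) (Set.Ioc w v) :=
    Integrable.mono' hD_int hE_meas ((ae_restrict_iff' measurableSet_Ioc).mpr (ae_of_all _ hbound))
  set E := ∫ x in Set.Ioc w v, gg α t x * (theta x - x) with hE
  have hsplit : ∫ x in Set.Ioc w v, gg α t x * theta x
      = (∫ x in Set.Ioc w v, gg α t x * x) + E := by
    rw [← integral_add hInt1 hE_int]
    exact setIntegral_congr_fun measurableSet_Ioc (fun x _ => by ring)
  -- FTC for the main part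
  have hIntA : ∫ x in Set.Ioc w v, gg α t x * x
      = (v * ff α t v - FF β t v) - (w * ff α t w - FF β t w) := by
    rw [← intervalIntegral.integral_of_le hwv.le]
    rw [intervalIntegral.integral_eq_sub_of_hasDerivAt
      (f := fun u : ℝ => u * ff α t u - FF β t u) ?_ ?_]
    · intro x hx
      rw [Set.uIcc_of_le hwv.le] at hx
      have hx0 := hpos x hx
      have h1 : HasDerivAt (fun u : ℝ => u * ff α t u) (1 * ff α t x + x * gg α t x) x :=
        (hasDerivAt_id x).mul (hasDerivAt_ff α t hx0)
      have h3 := h1.sub (hasDerivAt_FF β t hβ0 hx0)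
      refine h3.congr_deriv ?_
      rw [show β - 1 = -α from hβ1]
      simp only [ff]
      ring
    · apply ContinuousOn.intervalIntegrable
      rw [Set.uIcc_of_le hwv.le]
      exact hcont_gid
  -- FTC for the dominating function
  have hIntD : ∫ x in Set.Ioc w v, ε * C * x ^ (β - 1) = ε * C * (v ^ β - w ^ β) / β := by
    rw [← intervalIntegral.integral_of_le hwv.le]
    rw [intervalIntegral.integral_eq_sub_of_hasDerivAt
      (f := fun u : ℝ => ε * C / β * u ^ β) ?_ ?_]
    · field_simp
    · intro x hx
      rw [Set.uIcc_of_le hwv.le] at hx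
      have hx0 := hpos x hx
      have h := (Real.hasDerivAt_rpow_const (x := x) (p := β)
        (Or.inl (ne_of_gt hx0))).const_mul (ε * C / β)
      refine h.congr_deriv ?_
      field_simp
    · apply ContinuousOn.intervalIntegrable
      rw [Set.uIcc_of_le hwv.le]
      exact hcontD
  have hEbound : |E| ≤ ε * C * (v ^ β - w ^ β) / β := by
    rw [← hIntD, ← Real.norm_eq_abs]
    exact norm_integral_le_of_norm_le hD_int
      ((ae_restrict_iff' measurableSet_Ioc).mpr (ae_of_all _ hbound))
  -- endpoint bounds
  have key : ∀ x ∈ Set.Icc w v, |ff α t x * (theta x - x)| ≤ 2 * ε * x ^ β := by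
    intro x hx
    have hx0 := hpos x hx
    rw [abs_mul]
    have h1 : |ff α t x| ≤ 2 * x ^ (-α) := by
      rw [ff, abs_mul, abs_of_nonneg (Real.rpow_nonneg hx0.le _)]
      apply mul_le_mul_of_nonneg_right _ (Real.rpow_nonneg hx0.le _)
      rw [abs_of_nonneg (by nlinarith [Real.cos_le_one (t * Real.log x)])]
      nlinarith [Real.neg_one_le_cos (t * Real.log x)]
    calc |ff α t x| * |theta x - x| ≤ (2 * x ^ (-α)) * (ε * x) :=
        mul_le_mul h1 (hθ x hx) (abs_nonneg _) (by positivity)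
      _ = 2 * ε * (x ^ (-α) * x) := by ring
      _ = 2 * ε * x ^ β := by
          rw [← Real.rpow_add_one (ne_of_gt hx0)]
          congr 1; rw [hβ]; ring_nf
  have hxv : v ∈ Set.Icc w v := ⟨hwv.le, le_refl v⟩
  have hxw : w ∈ Set.Icc w v := ⟨le_refl w, hwv.le⟩
  have h4 : ff α t v * (theta v - v) ≥ -(2 * ε * v ^ β) := by
    have h := key v hxv
    have := neg_abs_le (ff α t v * (theta v - v))
    linarith
  have h5 : ff α t w * (theta w - w) ≤ 2 * ε * w ^ β := by
    have h := key w hxw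
    have := le_abs_self (ff α t w * (theta w - w))
    linarith
  -- the main-term computation
  have hKpos : 0 < β ^ 2 + t ^ 2 := by positivity
  have hsqK : Real.sqrt (β ^ 2 + t ^ 2) * Real.sqrt (β ^ 2 + t ^ 2) = β ^ 2 + t ^ 2 :=
    Real.mul_self_sqrt hKpos.le
  have hsK0 : (0:ℝ) < Real.sqrt (β ^ 2 + t ^ 2) := Real.sqrt_pos.mpr hKpos
  have hFFv := cos_delta β t (t * Real.log v) hβ0
  have hFFw := cos_delta β t (t * Real.log w) hβ0
  have hkey2 : (v ^ β * Real.cos (t * Real.log v - Real.arctan (t / β)) -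
      w ^ β * Real.cos (t * Real.log w - Real.arctan (t / β))) * Real.sqrt (β ^ 2 + t ^ 2)
      = (β * Real.cos (t * Real.log v) + t * Real.sin (t * Real.log v)) * v ^ β -
        (β * Real.cos (t * Real.log w) + t * Real.sin (t * Real.log w)) * w ^ β := by
    linear_combination v ^ β * hFFv - w ^ β * hFFw
  have hkey3 : (v ^ β * Real.cos (t * Real.log v - Real.arctan (t / β)) -
      w ^ β * Real.cos (t * Real.log w - Real.arctan (t / β))) / Real.sqrt (β ^ 2 + t ^ 2)
      = ((β * Real.cos (t * Real.log v) + t * Real.sin (t * Real.log v)) * v ^ β -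
        (β * Real.cos (t * Real.log w) + t * Real.sin (t * Real.log w)) * w ^ β) /
          (β ^ 2 + t ^ 2) := by
    rw [div_eq_div_iff hsK0.ne' hKpos.ne']
    linear_combination Real.sqrt (β ^ 2 + t ^ 2) * hkey2 -
      (v ^ β * Real.cos (t * Real.log v - Real.arctan (t / β)) -
        w ^ β * Real.cos (t * Real.log w - Real.arctan (t / β))) * hsqK
  have hFF : FF β t v - FF β t w =
      (v ^ β - w ^ β) / β -
        (v ^ β * Real.cos (t * Real.log v - Real.arctan (t / β)) -
          w ^ β * Real.cos (t * Real.log w - Real.arctan (t / β))) /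
            Real.sqrt (β ^ 2 + t ^ 2) := by
    rw [FF, FF, hkey3]
    ring
  -- assemble Σ
  have hSigma : ∑ k ∈ Finset.Ioc ⌊w⌋₊ ⌊v⌋₊, ff α t k * cc k
      = (FF β t v - FF β t w) + ff α t v * (theta v - v) - ff α t w * (theta w - w) - E := by
    rw [habel2, hsplit, hIntA]; ring
  -- sum comparison
  have hset : (Finset.range (⌊v⌋₊ + 1)).filter (fun p : ℕ => Nat.Prime p ∧ w < (p:ℝ))
      = (Finset.Ioc ⌊w⌋₊ ⌊v⌋₊).filter Nat.Prime := by
    ext p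
    simp only [Finset.mem_filter, Finset.mem_range, Finset.mem_Ioc, Nat.lt_succ_iff,
      ← Nat.floor_lt hw0.le]
    tauto
  have hSfilter : ∑ k ∈ Finset.Ioc ⌊w⌋₊ ⌊v⌋₊, ff α t k * cc k
      = ∑ k ∈ (Finset.Ioc ⌊w⌋₊ ⌊v⌋₊).filter Nat.Prime, ff α t k * Real.log k := by
    rw [Finset.sum_filter]
    exact Finset.sum_congr rfl (fun k _ => by simp [cc, mul_ite, mul_zero])
  have hWS : ∑ k ∈ Finset.Ioc ⌊w⌋₊ ⌊v⌋₊, ff α t k * cc k ≤ W α v w t * Real.log v := by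
    rw [hSfilter, W, hset, Finset.sum_mul]
    apply Finset.sum_le_sum
    intro p hp
    simp only [Finset.mem_filter, Finset.mem_Ioc] at hp
    have hp1 : (1:ℝ) ≤ p := by exact_mod_cast hp.2.one_lt.le
    have hpv : (p:ℝ) ≤ v :=
      le_trans (by exact_mod_cast hp.1.2 : (p:ℝ) ≤ (⌊v⌋₊:ℝ)) (Nat.floor_le hv0.le)
    have hff : ff α t p = (1 - Real.cos (t * Real.log p)) / (p:ℝ) ^ α := by
      rw [ff, Real.rpow_neg (by linarith : (0:ℝ) ≤ (p:ℝ)), div_eq_mul_inv]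
    rw [hff]
    have hlog : Real.log p ≤ Real.log v :=
      Real.log_le_log (show (0:ℝ) < (p:ℝ) by linarith) hpv
    have h1c : 0 ≤ 1 - Real.cos (t * Real.log p) := by
      nlinarith [Real.cos_le_one (t * Real.log p)]
    have hcoef : 0 ≤ (1 - Real.cos (t * Real.log p)) / (p:ℝ) ^ α :=
      div_nonneg h1c (Real.rpow_nonneg (by linarith) α)
    exact mul_le_mul_of_nonneg_left hlog hcoef
  -- final arithmetic
  have hnegE : -E ≥ -(ε * C * (v ^ β - w ^ β) / β) := by
    have := le_abs_self E
    linarith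
  have hexpand : 2 * ε * (v ^ β + w ^ β) = 2 * ε * v ^ β + 2 * ε * w ^ β := by ring
  have hgoalC : ε * C * (v ^ β - w ^ β) / β = ε * C * (v ^ β - w ^ β) / β := rfl
  linarith [hWS, hSigma, hFF, h4, h5, hnegE]
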